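/- Let S be a finite set of real numbers and η ≠ 0 a real number such that for all distinct x,y ∈ S the numbers x-y, x-y±η, x-y±2η are all nonzero. Define U⁺(x,y) = ((x-y+2η)(x-y-η))/((x-y+η)(x-y)) and U⁻(x,y) = ((x-y-2η)(x-y+η))/((x-y-η)(x-y)). Then for every subset size m, ∑_{I⊆S, |I|=m} ∏_{i∈I} ∏_{ℓ∈S∖I} U⁺(i,ℓ) = ∑_{I⊆S, |I|=m} ∏_{i∈I} ∏_{ℓ∈S∖I} U⁻(i,ℓ). -/

import Mathlib

open Polynomial Finset

noncomputable section DeformedRS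
namespace DeformedRS

/-- The elementary factor U⁺. -/
def dru (η d : ℝ) : ℝ := ((d + 2*η) * (d - η)) / ((d + η) * d)

/-- The subset sums J⁺. -/
def drS (η : ℝ) (V : Finset ℝ) (k : ℕ) : ℝ :=
  ∑ I ∈ V.powersetCard k, ∏ i ∈ I, ∏ ℓ ∈ V \ I, dru η (i - ℓ)

def lin3 (η c : ℝ) : ℝ[X] := (X - C c) * (X - C (c - η)) * (X - C (c + η))
def gfac (η c : ℝ) : ℝ[X] := (X - C (c - 2*η)) * (X - C (c + η)) * (X - C (c + η))
def hfac (η c : ℝ) : ℝ[X] := (X - C (c + 2*η)) * (X - C (c - η)) * (X - C (c - η))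

def AA (η : ℝ) (T I : Finset ℝ) : ℝ := ∏ i ∈ I, ∏ ℓ ∈ T \ I, dru η (i - ℓ)
def GG (η : ℝ) (T I : Finset ℝ) : ℝ[X] := (∏ ℓ ∈ T \ I, gfac η ℓ) * ∏ ℓ ∈ I, lin3 η ℓ
def HH (η : ℝ) (T I : Finset ℝ) : ℝ[X] := (∏ i ∈ I, hfac η i) * ∏ ℓ ∈ T \ I, lin3 η ℓ
def PP (η : ℝ) (T : Finset ℝ) (k : ℕ) : ℝ[X] :=
  (∑ I ∈ T.powersetCard k, C (AA η T I) * GG η T I)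
  + ∑ I ∈ T.powersetCard (k+1), C (AA η T I) * HH η T I
def QQ (η : ℝ) (T : Finset ℝ) : ℝ[X] := ∏ ℓ ∈ T, lin3 η ℓ

def Ok (η : ℝ) (S : Finset ℝ) : Prop := ∀ x ∈ S, ∀ y ∈ S, x ≠ y →
  x - y ≠ 0 ∧ x - y + η ≠ 0 ∧ x - y - η ≠ 0 ∧ x - y + 2*η ≠ 0 ∧ x - y - 2*η ≠ 0

lemma Ok.mono {η : ℝ} {S T : Finset ℝ} (h : Ok η S) (hT : T ⊆ S) : Ok η T :=
  fun x hx y hy hxy => h x (hT hx) y (hT hy) hxy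

lemma drS_eq (η : ℝ) (V : Finset ℝ) (k : ℕ) :
    drS η V k = ∑ I ∈ V.powersetCard k, AA η V I := rfl

/-! ### elementary factor identities -/

lemma core_pos {η d : ℝ} (h0 : d ≠ 0) (h1 : d + η ≠ 0) :
    dru η d * ((d + η) * d) = (d + 2*η) * (d - η) := by
  unfold dru; rw [div_mul_cancel₀]; exact mul_ne_zero h1 h0

lemma dru_neg (η d : ℝ) : dru η (-d) = ((d - 2*η) * (d + η)) / ((d - η) * d) := by
  unfold dru
  rw [show (-d + 2*η) * (-d - η) = (d - 2*η) * (d + η) by ring,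
    show (-d + η) * -d = (d - η) * d by ring]

lemma core_neg {η d : ℝ} (h0 : d ≠ 0) (h1 : d - η ≠ 0) :
    dru η (-d) * ((d - η) * d) = (d - 2*η) * (d + η) := by
  rw [dru_neg, div_mul_cancel₀]; exact mul_ne_zero h1 h0

/-! ### polynomial evaluation of the factors -/

lemma lin3_eval (η c t : ℝ) :
    (lin3 η c).eval t = (t - c) * (t - c + η) * (t - c - η) := by
  simp only [lin3, eval_mul, eval_sub, eval_X, eval_C]; ring

lemma gfac_eval (η c t : ℝ) :
    (gfac η c).eval t = (t - c + 2*η) * (t - c - η) * (t - c - η) := by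
  simp only [gfac, eval_mul, eval_sub, eval_X, eval_C]; ring

lemma hfac_eval (η c t : ℝ) :
    (hfac η c).eval t = (t - c - 2*η) * (t - c + η) * (t - c + η) := by
  simp only [hfac, eval_mul, eval_sub, eval_X, eval_C]; ring

/-! ### monicity and degrees -/

lemma lin3_monic (η c : ℝ) : (lin3 η c).Monic :=
  ((monic_X_sub_C _).mul (monic_X_sub_C _)).mul (monic_X_sub_C _)

lemma gfac_monic (η c : ℝ) : (gfac η c).Monic :=
  ((monic_X_sub_C _).mul (monic_X_sub_C _)).mul (monic_X_sub_C _)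

lemma hfac_monic (η c : ℝ) : (hfac η c).Monic :=
  ((monic_X_sub_C _).mul (monic_X_sub_C _)).mul (monic_X_sub_C _)

lemma lin3_natDegree (η c : ℝ) : (lin3 η c).natDegree = 3 := by
  rw [lin3, Monic.natDegree_mul ((monic_X_sub_C _).mul (monic_X_sub_C _)) (monic_X_sub_C _),
    Monic.natDegree_mul (monic_X_sub_C _) (monic_X_sub_C _)]
  simp only [natDegree_X_sub_C]


lemma gfac_natDegree (η c : ℝ) : (gfac η c).natDegree = 3 := by
  rw [gfac, Monic.natDegree_mul ((monic_X_sub_C _).mul (monic_X_sub_C _)) (monic_X_sub_C _),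
    Monic.natDegree_mul (monic_X_sub_C _) (monic_X_sub_C _)]
  simp only [natDegree_X_sub_C]


lemma hfac_natDegree (η c : ℝ) : (hfac η c).natDegree = 3 := by
  rw [hfac, Monic.natDegree_mul ((monic_X_sub_C _).mul (monic_X_sub_C _)) (monic_X_sub_C _),
    Monic.natDegree_mul (monic_X_sub_C _) (monic_X_sub_C _)]
  simp only [natDegree_X_sub_C]


lemma GG_monic (η : ℝ) (T I : Finset ℝ) : (GG η T I).Monic :=
  (monic_prod_of_monic _ _ fun c _ => gfac_monic η c).mul
    (monic_prod_of_monic _ _ fun c _ => lin3_monic η c)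

lemma HH_monic (η : ℝ) (T I : Finset ℝ) : (HH η T I).Monic :=
  (monic_prod_of_monic _ _ fun c _ => hfac_monic η c).mul
    (monic_prod_of_monic _ _ fun c _ => lin3_monic η c)

lemma GG_natDegree {η : ℝ} {T I : Finset ℝ} (hI : I ⊆ T) :
    (GG η T I).natDegree = 3 * T.card := by
  have hc := Finset.card_le_card hI
  rw [GG, Monic.natDegree_mul (monic_prod_of_monic _ _ fun c _ => gfac_monic η c)
      (monic_prod_of_monic _ _ fun c _ => lin3_monic η c),
    natDegree_prod_of_monic _ _ fun c _ => gfac_monic η c,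
    natDegree_prod_of_monic _ _ fun c _ => lin3_monic η c]
  simp only [gfac_natDegree, lin3_natDegree, Finset.sum_const, smul_eq_mul,
    Finset.card_sdiff_of_subset hI]
  omega

lemma HH_natDegree {η : ℝ} {T I : Finset ℝ} (hI : I ⊆ T) :
    (HH η T I).natDegree = 3 * T.card := by
  have hc := Finset.card_le_card hI
  rw [HH, Monic.natDegree_mul (monic_prod_of_monic _ _ fun c _ => hfac_monic η c)
      (monic_prod_of_monic _ _ fun c _ => lin3_monic η c),
    natDegree_prod_of_monic _ _ fun c _ => hfac_monic η c,
    natDegree_prod_of_monic _ _ fun c _ => lin3_monic η c]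
  simp only [hfac_natDegree, lin3_natDegree, Finset.sum_const, smul_eq_mul,
    Finset.card_sdiff_of_subset hI]
  omega

lemma PP_natDegree_le (η : ℝ) (T : Finset ℝ) (k : ℕ) :
    (PP η T k).natDegree ≤ 3 * T.card := by
  refine (natDegree_add_le _ _).trans (max_le ?_ ?_) <;>
    refine natDegree_sum_le_of_forall_le _ _ fun I hI => (natDegree_C_mul_le _ _).trans ?_
  · exact le_of_eq (GG_natDegree (Finset.mem_powersetCard.1 hI).1)
  · exact le_of_eq (HH_natDegree (Finset.mem_powersetCard.1 hI).1)

lemma PP_coeff_top (η : ℝ) (T : Finset ℝ) (k : ℕ) :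
    (PP η T k).coeff (3 * T.card) = drS η T k + drS η T (k+1) := by
  rw [PP, coeff_add, finset_sum_coeff, finset_sum_coeff, drS_eq, drS_eq]
  congr 1 <;> refine Finset.sum_congr rfl fun I hI => ?_
  · rw [coeff_C_mul, ← GG_natDegree (Finset.mem_powersetCard.1 hI).1,
      Monic.coeff_natDegree (GG_monic η T I), mul_one]
  · rw [coeff_C_mul, ← HH_natDegree (Finset.mem_powersetCard.1 hI).1,
      Monic.coeff_natDegree (HH_monic η T I), mul_one]

/-! ### set and sum bookkeeping -/

lemma sdiff_ins {a : ℝ} {T I : Finset ℝ} (h : a ∉ I) :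
    insert a T \ I = insert a (T \ I) := by
  ext x
  simp only [Finset.mem_sdiff, Finset.mem_insert]
  constructor
  · rintro ⟨(rfl | hx), hnx⟩
    · exact Or.inl rfl
    · exact Or.inr ⟨hx, hnx⟩
  · rintro (rfl | ⟨hx, hnx⟩)
    · exact ⟨Or.inl rfl, h⟩
    · exact ⟨Or.inr hx, hnx⟩

lemma ins_sdiff_ins {a : ℝ} {T I : Finset ℝ} (ha : a ∉ T) :
    insert a T \ insert a I = T \ I := by
  ext x
  simp only [Finset.mem_sdiff, Finset.mem_insert, not_or]
  constructor
  · rintro ⟨(rfl | hx), hna, hnx⟩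
    · exact absurd rfl hna
    · exact ⟨hx, hnx⟩
  · rintro ⟨hx, hnx⟩
    exact ⟨Or.inr hx, fun h => ha (h ▸ hx), hnx⟩

lemma sum_split {a : ℝ} {T : Finset ℝ} (ha : a ∉ T) (k : ℕ) (f : Finset ℝ → ℝ) :
    ∑ J ∈ (insert a T).powersetCard (k+1), f J
      = (∑ J ∈ T.powersetCard (k+1), f J) + ∑ I ∈ T.powersetCard k, f (insert a I) := by
  rw [Finset.powersetCard_succ_insert ha, Finset.sum_union, Finset.sum_image]
  · intro I hI J hJ h
    have hIa : a ∉ I := fun hx => ha ((Finset.mem_powersetCard.1 hI).1 hx)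
    have hJa : a ∉ J := fun hx => ha ((Finset.mem_powersetCard.1 hJ).1 hx)
    have := congrArg (fun s : Finset ℝ => s.erase a) h
    simpa [Finset.erase_insert hIa, Finset.erase_insert hJa] using this
  · rw [Finset.disjoint_left]
    intro J hJ hJ'
    obtain ⟨I, hI, rfl⟩ := Finset.mem_image.1 hJ'
    exact ha ((Finset.mem_powersetCard.1 hJ).1 (Finset.mem_insert_self a I))

lemma AA_insert_out {η a : ℝ} {T I : Finset ℝ} (ha : a ∉ T) (hI : I ⊆ T) :
    AA η (insert a T) I = (∏ i ∈ I, dru η (i - a)) * AA η T I := by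
  have haI : a ∉ I := fun h => ha (hI h)
  unfold AA
  rw [sdiff_ins haI, ← Finset.prod_mul_distrib]
  refine Finset.prod_congr rfl fun i _ => ?_
  rw [Finset.prod_insert (fun h => ha (Finset.mem_sdiff.1 h).1)]

lemma AA_insert_in {η a : ℝ} {T I : Finset ℝ} (ha : a ∉ T) (hI : I ⊆ T) :
    AA η (insert a T) (insert a I) = (∏ ℓ ∈ T \ I, dru η (a - ℓ)) * AA η T I := by
  have haI : a ∉ I := fun h => ha (hI h)
  unfold AA
  rw [ins_sdiff_ins ha, Finset.prod_insert haI]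

lemma PP_eval (η : ℝ) (T : Finset ℝ) (k : ℕ) (t : ℝ) :
    (PP η T k).eval t
      = (∑ I ∈ T.powersetCard k, AA η T I * (GG η T I).eval t)
      + ∑ I ∈ T.powersetCard (k+1), AA η T I * (HH η T I).eval t := by
  simp [PP, eval_finset_sum]

/-! ### the main evaluation identity -/

lemma drS_mul_QQ {η a : ℝ} {T : Finset ℝ} (ha : a ∉ T)
    (h : ∀ ℓ ∈ T, a - ℓ ≠ 0 ∧ a - ℓ + η ≠ 0 ∧ a - ℓ - η ≠ 0) (k : ℕ) :
    drS η (insert a T) (k+1) * (QQ η T).eval a = (PP η T k).eval a := by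
  unfold drS
  rw [sum_split ha, add_mul, Finset.sum_mul, Finset.sum_mul, PP_eval, add_comm]
  congr 1
  · refine Finset.sum_congr rfl fun I hI => ?_
    obtain ⟨hIT, -⟩ := Finset.mem_powersetCard.1 hI
    have e0 : (∏ i ∈ insert a I, ∏ ℓ ∈ insert a T \ insert a I, dru η (i - ℓ))
        = AA η (insert a T) (insert a I) := rfl
    rw [e0, AA_insert_in ha hIT, QQ, eval_prod, GG, eval_mul, eval_prod, eval_prod,
      ← Finset.prod_sdiff hIT]
    have key : (∏ ℓ ∈ T \ I, dru η (a - ℓ)) * (∏ ℓ ∈ T \ I, (lin3 η ℓ).eval a)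
        = ∏ ℓ ∈ T \ I, (gfac η ℓ).eval a := by
      rw [← Finset.prod_mul_distrib]
      refine Finset.prod_congr rfl fun ℓ hℓ => ?_
      obtain ⟨h1, h2, h3⟩ := h ℓ (Finset.mem_sdiff.1 hℓ).1
      rw [lin3_eval, gfac_eval]
      linear_combination (a - ℓ - η) * core_pos h1 h2
    linear_combination (AA η T I * ∏ ℓ ∈ I, (lin3 η ℓ).eval a) * key
  · refine Finset.sum_congr rfl fun J hJ => ?_
    obtain ⟨hJT, -⟩ := Finset.mem_powersetCard.1 hJ
    have e0 : (∏ i ∈ J, ∏ ℓ ∈ insert a T \ J, dru η (i - ℓ))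
        = AA η (insert a T) J := rfl
    rw [e0, AA_insert_out ha hJT, QQ, eval_prod, HH, eval_mul, eval_prod, eval_prod,
      ← Finset.prod_sdiff hJT]
    have key : (∏ i ∈ J, dru η (i - a)) * (∏ i ∈ J, (lin3 η i).eval a)
        = ∏ i ∈ J, (hfac η i).eval a := by
      rw [← Finset.prod_mul_distrib]
      refine Finset.prod_congr rfl fun i hi => ?_
      obtain ⟨h1, h2, h3⟩ := h i (hJT hi)
      rw [lin3_eval, hfac_eval, show i - a = -(a - i) by ring]
      linear_combination (a - i + η) * core_neg h1 h3
    linear_combination (AA η T J * ∏ ℓ ∈ T \ J, (lin3 η ℓ).eval a) * key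

/-! ### zero evaluations -/

lemma lin3_eval_self (η p : ℝ) : (lin3 η p).eval p = 0 := by rw [lin3_eval]; ring
lemma lin3_eval_sub (η p : ℝ) : (lin3 η p).eval (p - η) = 0 := by rw [lin3_eval]; ring
lemma lin3_eval_add (η p : ℝ) : (lin3 η p).eval (p + η) = 0 := by rw [lin3_eval]; ring
lemma gfac_eval_add (η p : ℝ) : (gfac η p).eval (p + η) = 0 := by rw [gfac_eval]; ring
lemma hfac_eval_sub (η p : ℝ) : (hfac η p).eval (p - η) = 0 := by rw [hfac_eval]; ring

lemma GG_eval_zero_of_mem {η t : ℝ} {T I : Finset ℝ} {p : ℝ} (hp : p ∈ I)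
    (h0 : (lin3 η p).eval t = 0) : (GG η T I).eval t = 0 := by
  rw [GG, eval_mul, eval_prod, eval_prod, Finset.prod_eq_zero hp h0, mul_zero]

lemma GG_eval_zero_of_sdiff {η t : ℝ} {T I : Finset ℝ} {p : ℝ} (hp : p ∈ T \ I)
    (h0 : (gfac η p).eval t = 0) : (GG η T I).eval t = 0 := by
  rw [GG, eval_mul, eval_prod, Finset.prod_eq_zero hp h0, zero_mul]

lemma HH_eval_zero_of_mem {η t : ℝ} {T I : Finset ℝ} {p : ℝ} (hp : p ∈ I)
    (h0 : (hfac η p).eval t = 0) : (HH η T I).eval t = 0 := by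
  rw [HH, eval_mul, eval_prod, Finset.prod_eq_zero hp h0, zero_mul]

lemma HH_eval_zero_of_sdiff {η t : ℝ} {T I : Finset ℝ} {p : ℝ} (hp : p ∈ T \ I)
    (h0 : (lin3 η p).eval t = 0) : (HH η T I).eval t = 0 := by
  rw [HH, eval_mul, eval_prod, eval_prod, Finset.prod_eq_zero hp h0, mul_zero]

/-! ### sum reindexing around a marked point -/

lemma pc_filter_not {p : ℝ} {T : Finset ℝ} (k : ℕ) :
    (T.powersetCard k).filter (fun I => p ∉ I) = (T.erase p).powersetCard k := by
  ext I
  simp only [Finset.mem_filter, Finset.mem_powersetCard, Finset.subset_erase]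
  tauto

lemma sum_pc_not_mem {p : ℝ} {T : Finset ℝ} (k : ℕ) (f : Finset ℝ → ℝ)
    (hf : ∀ I ∈ T.powersetCard k, p ∈ I → f I = 0) :
    ∑ I ∈ T.powersetCard k, f I = ∑ I ∈ (T.erase p).powersetCard k, f I := by
  rw [← Finset.sum_filter_add_sum_filter_not (T.powersetCard k) (fun I => p ∈ I)]
  rw [Finset.sum_eq_zero (fun I hI => hf I (Finset.mem_filter.1 hI).1 (Finset.mem_filter.1 hI).2),
    zero_add]
  congr 1
  exact pc_filter_not k

lemma sum_pc_mem {p : ℝ} {T : Finset ℝ} (hp : p ∈ T) (k : ℕ) (f : Finset ℝ → ℝ)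
    (hf : ∀ J ∈ T.powersetCard (k+1), p ∉ J → f J = 0) :
    ∑ J ∈ T.powersetCard (k+1), f J
      = ∑ I ∈ (T.erase p).powersetCard k, f (insert p I) := by
  conv_lhs => rw [← Finset.insert_erase hp]
  rw [sum_split (Finset.notMem_erase p T) k f]
  have hz : ∀ J ∈ (T.erase p).powersetCard (k+1), f J = 0 := by
    intro J hJ
    obtain ⟨hJT, hc⟩ := Finset.mem_powersetCard.1 hJ
    exact hf J (Finset.mem_powersetCard.2 ⟨hJT.trans (Finset.erase_subset p T), hc⟩)
      (fun hpJ => Finset.notMem_erase p T (hJT hpJ))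
  rw [Finset.sum_eq_zero hz, zero_add]

/-! ### the pairing cancellation at t = p -/

lemma pair_cancel {η p : ℝ} {T0 I : Finset ℝ} (hp0 : p ∉ T0) (hI : I ⊆ T0)
    (h : ∀ ℓ ∈ T0, p - ℓ ≠ 0 ∧ p - ℓ + η ≠ 0 ∧ p - ℓ - η ≠ 0) :
    AA η (insert p T0) I * (GG η (insert p T0) I).eval p
      + AA η (insert p T0) (insert p I) * (HH η (insert p T0) (insert p I)).eval p = 0 := by
  have hpI : p ∉ I := fun hx => hp0 (hI hx)
  have hpTI : p ∉ T0 \ I := fun hx => hp0 (Finset.mem_sdiff.1 hx).1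
  rw [AA_insert_out hp0 hI, AA_insert_in hp0 hI,
    GG, sdiff_ins hpI, eval_mul, eval_prod, eval_prod, Finset.prod_insert hpTI,
    HH, ins_sdiff_ins hp0, eval_mul, eval_prod, eval_prod, Finset.prod_insert hpI]
  have hg : (gfac η p).eval p = 2*η^3 := by rw [gfac_eval]; ring
  have hh : (hfac η p).eval p = -(2*η^3) := by rw [hfac_eval]; ring
  rw [hg, hh]
  have key1 : (∏ i ∈ I, dru η (i - p)) * ∏ i ∈ I, (lin3 η i).eval p
      = ∏ i ∈ I, (hfac η i).eval p := by
    rw [← Finset.prod_mul_distrib]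
    refine Finset.prod_congr rfl fun i hi => ?_
    obtain ⟨h1, h2, h3⟩ := h i (hI hi)
    rw [lin3_eval, hfac_eval, show i - p = -(p - i) by ring]
    linear_combination (p - i + η) * core_neg h1 h3
  have key2 : (∏ ℓ ∈ T0 \ I, dru η (p - ℓ)) * ∏ ℓ ∈ T0 \ I, (lin3 η ℓ).eval p
      = ∏ ℓ ∈ T0 \ I, (gfac η ℓ).eval p := by
    rw [← Finset.prod_mul_distrib]
    refine Finset.prod_congr rfl fun ℓ hℓ => ?_
    obtain ⟨h1, h2, h3⟩ := h ℓ (Finset.mem_sdiff.1 hℓ).1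
    rw [lin3_eval, gfac_eval]
    linear_combination (p - ℓ - η) * core_pos h1 h2
  linear_combination (2*η^3 * AA η T0 I * ∏ ℓ ∈ T0 \ I, (gfac η ℓ).eval p) * key1
    - (2*η^3 * AA η T0 I * ∏ i ∈ I, (hfac η i).eval p) * key2

lemma PP_eval_root {η p : ℝ} {T0 : Finset ℝ} (hp0 : p ∉ T0)
    (h : ∀ ℓ ∈ T0, p - ℓ ≠ 0 ∧ p - ℓ + η ≠ 0 ∧ p - ℓ - η ≠ 0) (k : ℕ) :
    (PP η (insert p T0) k).eval p = 0 := by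
  rw [PP_eval]
  rw [sum_pc_not_mem k _ (fun I _ hpI => by
      rw [GG_eval_zero_of_mem hpI (lin3_eval_self η p), mul_zero])]
  rw [sum_pc_mem (Finset.mem_insert_self p T0) k _ (fun J _ hpJ => by
      rw [HH_eval_zero_of_sdiff
        (Finset.mem_sdiff.2 ⟨Finset.mem_insert_self p T0, hpJ⟩) (lin3_eval_self η p), mul_zero])]
  rw [Finset.erase_insert hp0, ← Finset.sum_add_distrib]
  refine Finset.sum_eq_zero fun I hI => ?_
  exact pair_cancel hp0 (Finset.mem_powersetCard.1 hI).1 h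

/-! ### evaluations at t = p ∓ η -/

lemma PP_eval_sub {η p : ℝ} {T0 : Finset ℝ} (hp0 : p ∉ T0)
    (h : ∀ ℓ ∈ T0, p - ℓ ≠ 0 ∧ p - ℓ + η ≠ 0 ∧ p - ℓ - η ≠ 0) (k : ℕ) :
    (PP η (insert p T0) k).eval (p - η)
      = (4*η^3 * ∏ ℓ ∈ T0, (p - ℓ + η) * ((p - ℓ - 2*η) * (p - ℓ - 2*η)))
        * drS η T0 k := by
  rw [PP_eval]
  have hH : ∀ J ∈ (insert p T0).powersetCard (k+1),
      AA η (insert p T0) J * (HH η (insert p T0) J).eval (p - η) = 0 := by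
    intro J _
    by_cases hpJ : p ∈ J
    · rw [HH_eval_zero_of_mem hpJ (hfac_eval_sub η p), mul_zero]
    · rw [HH_eval_zero_of_sdiff
        (Finset.mem_sdiff.2 ⟨Finset.mem_insert_self p T0, hpJ⟩) (lin3_eval_sub η p), mul_zero]
  rw [Finset.sum_eq_zero hH, add_zero]
  rw [sum_pc_not_mem k _ (fun I _ hpI => by
      rw [GG_eval_zero_of_mem hpI (lin3_eval_sub η p), mul_zero])]
  rw [Finset.erase_insert hp0, drS_eq, Finset.mul_sum]
  refine Finset.sum_congr rfl fun I hI => ?_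
  obtain ⟨hIT0, -⟩ := Finset.mem_powersetCard.1 hI
  have hpI : p ∉ I := fun hx => hp0 (hIT0 hx)
  have hpTI : p ∉ T0 \ I := fun hx => hp0 (Finset.mem_sdiff.1 hx).1
  rw [AA_insert_out hp0 hIT0, GG, sdiff_ins hpI, eval_mul, eval_prod, eval_prod,
    Finset.prod_insert hpTI]
  have hg : (gfac η p).eval (p - η) = 4*η^3 := by rw [gfac_eval]; ring
  rw [hg, ← Finset.prod_sdiff hIT0]
  have key1 : (∏ i ∈ I, dru η (i - p)) * ∏ i ∈ I, (lin3 η i).eval (p - η)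
      = ∏ i ∈ I, (p - i + η) * ((p - i - 2*η) * (p - i - 2*η)) := by
    rw [← Finset.prod_mul_distrib]
    refine Finset.prod_congr rfl fun i hi => ?_
    obtain ⟨h1, h2, h3⟩ := h i (hIT0 hi)
    rw [lin3_eval, show i - p = -(p - i) by ring]
    linear_combination (p - i - 2*η) * core_neg h1 h3
  have key2 : (∏ ℓ ∈ T0 \ I, (gfac η ℓ).eval (p - η))
      = ∏ ℓ ∈ T0 \ I, (p - ℓ + η) * ((p - ℓ - 2*η) * (p - ℓ - 2*η)) := by
    refine Finset.prod_congr rfl fun ℓ _ => ?_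
    rw [gfac_eval]; ring
  linear_combination
    (4*η^3 * AA η T0 I * ∏ ℓ ∈ T0 \ I, (gfac η ℓ).eval (p - η)) * key1
    + (4*η^3 * AA η T0 I * ∏ i ∈ I, (p - i + η) * ((p - i - 2*η) * (p - i - 2*η))) * key2

lemma PP_eval_add {η p : ℝ} {T0 : Finset ℝ} (hp0 : p ∉ T0)
    (h : ∀ ℓ ∈ T0, p - ℓ ≠ 0 ∧ p - ℓ + η ≠ 0 ∧ p - ℓ - η ≠ 0) (k : ℕ) :
    (PP η (insert p T0) k).eval (p + η)
      = (-(4*η^3) * ∏ ℓ ∈ T0, (p - ℓ - η) * ((p - ℓ + 2*η) * (p - ℓ + 2*η)))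
        * drS η T0 k := by
  rw [PP_eval]
  have hG : ∀ I ∈ (insert p T0).powersetCard k,
      AA η (insert p T0) I * (GG η (insert p T0) I).eval (p + η) = 0 := by
    intro I _
    by_cases hpI : p ∈ I
    · rw [GG_eval_zero_of_mem hpI (lin3_eval_add η p), mul_zero]
    · rw [GG_eval_zero_of_sdiff
        (Finset.mem_sdiff.2 ⟨Finset.mem_insert_self p T0, hpI⟩) (gfac_eval_add η p), mul_zero]
  rw [Finset.sum_eq_zero hG, zero_add]
  rw [sum_pc_mem (Finset.mem_insert_self p T0) k _ (fun J _ hpJ => by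
      rw [HH_eval_zero_of_sdiff
        (Finset.mem_sdiff.2 ⟨Finset.mem_insert_self p T0, hpJ⟩) (lin3_eval_add η p), mul_zero])]
  rw [Finset.erase_insert hp0, drS_eq, Finset.mul_sum]
  refine Finset.sum_congr rfl fun I hI => ?_
  obtain ⟨hIT0, -⟩ := Finset.mem_powersetCard.1 hI
  have hpI : p ∉ I := fun hx => hp0 (hIT0 hx)
  rw [AA_insert_in hp0 hIT0, HH, ins_sdiff_ins hp0, eval_mul, eval_prod, eval_prod,
    Finset.prod_insert hpI]
  have hh : (hfac η p).eval (p + η) = -(4*η^3) := by rw [hfac_eval]; ring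
  rw [hh, ← Finset.prod_sdiff hIT0]
  have key1 : (∏ ℓ ∈ T0 \ I, dru η (p - ℓ)) * ∏ ℓ ∈ T0 \ I, (lin3 η ℓ).eval (p + η)
      = ∏ ℓ ∈ T0 \ I, (p - ℓ - η) * ((p - ℓ + 2*η) * (p - ℓ + 2*η)) := by
    rw [← Finset.prod_mul_distrib]
    refine Finset.prod_congr rfl fun ℓ hℓ => ?_
    obtain ⟨h1, h2, h3⟩ := h ℓ (Finset.mem_sdiff.1 hℓ).1
    rw [lin3_eval]
    linear_combination (p - ℓ + 2*η) * core_pos h1 h2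
  have key2 : (∏ i ∈ I, (hfac η i).eval (p + η))
      = ∏ i ∈ I, (p - i - η) * ((p - i + 2*η) * (p - i + 2*η)) := by
    refine Finset.prod_congr rfl fun i _ => ?_
    rw [hfac_eval]; ring
  linear_combination
    (-(4*η^3) * AA η T0 I * ∏ i ∈ I, (hfac η i).eval (p + η)) * key1
    + (-(4*η^3) * AA η T0 I
        * ∏ ℓ ∈ T0 \ I, (p - ℓ - η) * ((p - ℓ + 2*η) * (p - ℓ + 2*η))) * key2

/-! ### equality of the interpolating polynomials -/

lemma PP_eq {η : ℝ} {T : Finset ℝ} (hη : η ≠ 0) (hT : Ok η T) {k k' : ℕ}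
    (htop : drS η T k + drS η T (k+1) = drS η T k' + drS η T (k'+1))
    (hsub : ∀ p ∈ T, drS η (T.erase p) k = drS η (T.erase p) k') :
    PP η T k = PP η T k' := by
  have hcond : ∀ p ∈ T, ∀ ℓ ∈ T.erase p,
      p - ℓ ≠ 0 ∧ p - ℓ + η ≠ 0 ∧ p - ℓ - η ≠ 0 := by
    intro p hp ℓ hℓ
    have hne : p ≠ ℓ := (Finset.ne_of_mem_erase hℓ).symm
    obtain ⟨a1, a2, a3, a4, a5⟩ := hT p hp ℓ (Finset.mem_of_mem_erase hℓ) hne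
    exact ⟨a1, a2, a3⟩
  by_contra hne
  set D := PP η T k - PP η T k' with hD
  have hD0 : D ≠ 0 := sub_ne_zero.2 hne
  have hDroot : ∀ p ∈ T, D.eval p = 0 ∧ D.eval (p - η) = 0 ∧ D.eval (p + η) = 0 := by
    intro p hp
    have h0 : p ∉ T.erase p := Finset.notMem_erase p T
    have hins : insert p (T.erase p) = T := Finset.insert_erase hp
    refine ⟨?_, ?_, ?_⟩ <;> rw [hD, eval_sub, ← hins]
    · rw [PP_eval_root h0 (hcond p hp), PP_eval_root h0 (hcond p hp), sub_self]
    · rw [PP_eval_sub h0 (hcond p hp), PP_eval_sub h0 (hcond p hp), hsub p hp, sub_self]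
    · rw [PP_eval_add h0 (hcond p hp), PP_eval_add h0 (hcond p hp), hsub p hp, sub_self]
  set R : Finset ℝ := T.biUnion (fun p => {p, p - η, p + η}) with hR
  have hcardR : R.card = 3 * T.card := by
    rw [hR, Finset.card_biUnion]
    · have h3 : ∀ q : ℝ, ({q, q - η, q + η} : Finset ℝ).card = 3 := by
        intro q
        refine Finset.card_eq_three.2 ⟨q, q - η, q + η, ?_, ?_, ?_, rfl⟩ <;>
          intro hx <;> exact hη (by linarith [hx])
      rw [Finset.sum_congr rfl (fun q _ => h3 q), Finset.sum_const, smul_eq_mul, mul_comm]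
    · intro p hp q hq hpq
      obtain ⟨a1, a2, a3, a4, a5⟩ := hT p hp q hq hpq
      rw [Function.onFun, Finset.disjoint_left]
      intro x hx hx'
      simp only [Finset.mem_insert, Finset.mem_singleton] at hx hx'
      rcases hx with rfl | rfl | rfl <;> rcases hx' with h | h | h <;>
        first
          | exact a1 (by linarith)
          | exact a2 (by linarith)
          | exact a3 (by linarith)
          | exact a4 (by linarith)
          | exact a5 (by linarith)
  have hsubR : R ⊆ D.roots.toFinset := by
    intro r hr
    rw [hR, Finset.mem_biUnion] at hr
    obtain ⟨p, hp, hr⟩ := hr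
    simp only [Finset.mem_insert, Finset.mem_singleton] at hr
    refine Multiset.mem_toFinset.2 (Polynomial.mem_roots'.2 ⟨hD0, ?_⟩)
    rcases hr with rfl | rfl | rfl
    · exact (hDroot _ hp).1
    · exact (hDroot _ hp).2.1
    · exact (hDroot _ hp).2.2
  have hle : R.card ≤ D.natDegree :=
    (Finset.card_le_card hsubR).trans
      ((Multiset.toFinset_card_le _).trans (Polynomial.card_roots' D))
  have hdeglt : D.natDegree < 3 * T.card := by
    have h1 : D.natDegree ≤ 3 * T.card :=
      (natDegree_sub_le _ _).trans (max_le (PP_natDegree_le η T k) (PP_natDegree_le η T k'))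
    rcases h1.lt_or_eq with h | h
    · exact h
    · exfalso
      have hc : D.coeff (3 * T.card) = 0 := by
        rw [hD, coeff_sub, PP_coeff_top, PP_coeff_top, htop, sub_self]
      exact hD0 (Polynomial.leadingCoeff_eq_zero.1 (by rw [Polynomial.leadingCoeff, h, hc]))
  omega

lemma drS_zero (η : ℝ) (V : Finset ℝ) : drS η V 0 = 1 := by
  unfold drS; rw [Finset.powersetCard_zero]; simp

lemma drS_self (η : ℝ) (V : Finset ℝ) : drS η V V.card = 1 := by
  unfold drS; rw [Finset.powersetCard_self, Finset.sum_singleton]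
  simp [Finset.sdiff_self]

/-! ### the key symmetry, by strong induction on the size of the set -/

lemma drS_symm {η : ℝ} (hη : η ≠ 0) :
    ∀ n (V : Finset ℝ), V.card ≤ n → Ok η V → ∀ m, m ≤ V.card →
      drS η V m = drS η V (V.card - m) := by
  intro n
  induction n with
  | zero =>
    intro V hV _ m hm
    have h0 : V.card = 0 := Nat.le_zero.1 hV
    have hm0 : m = 0 := by omega
    rw [hm0, Nat.sub_zero, h0]
  | succ n ih =>
    intro V hV hOk m hm
    by_cases hm0 : m = 0
    · rw [hm0, Nat.sub_zero, drS_zero, drS_self]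
    by_cases hmc : m = V.card
    · rw [hmc, Nat.sub_self, drS_zero, drS_self]
    have hVpos : 0 < V.card := by omega
    obtain ⟨a, ha⟩ := Finset.card_pos.1 hVpos
    have haT : a ∉ V.erase a := Finset.notMem_erase a V
    have hVT : insert a (V.erase a) = V := Finset.insert_erase ha
    have hTcard : (V.erase a).card = V.card - 1 := Finset.card_erase_of_mem ha
    have hOkT : Ok η (V.erase a) := hOk.mono (Finset.erase_subset a V)
    have hca : ∀ ℓ ∈ V.erase a, a - ℓ ≠ 0 ∧ a - ℓ + η ≠ 0 ∧ a - ℓ - η ≠ 0 := by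
      intro ℓ hl
      have hne : a ≠ ℓ := (Finset.ne_of_mem_erase hl).symm
      obtain ⟨a1, a2, a3, a4, a5⟩ := hOk a ha ℓ (Finset.mem_of_mem_erase hl) hne
      exact ⟨a1, a2, a3⟩
    set T := V.erase a with hT
    set k := m - 1 with hk
    set k' := T.card - m with hk'
    have hkm : k + 1 = m := by omega
    have hk'm : k' + 1 = V.card - m := by omega
    have htop : drS η T k + drS η T (k+1) = drS η T k' + drS η T (k'+1) := by
      have e1 := ih T (by omega) hOkT k (by omega)
      have e2 := ih T (by omega) hOkT (k+1) (by omega)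
      rw [show T.card - k = k' + 1 by omega] at e1
      rw [show T.card - (k+1) = k' by omega] at e2
      rw [e1, e2]; ring
    have hsub : ∀ p ∈ T, drS η (T.erase p) k = drS η (T.erase p) k' := by
      intro p hp
      have hc0 : (T.erase p).card = V.card - 2 := by
        rw [Finset.card_erase_of_mem hp, hTcard]; omega
      have e := ih (T.erase p) (by omega) (hOkT.mono (Finset.erase_subset p T)) k (by omega)
      rw [hc0, show V.card - 2 - k = k' by omega] at e
      exact e
    have hPP : PP η T k = PP η T k' := PP_eq hη hOkT htop hsub
    have hQ : (QQ η T).eval a ≠ 0 := by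
      rw [QQ, eval_prod]
      refine Finset.prod_ne_zero_iff.2 fun ℓ hl => ?_
      obtain ⟨h1, h2, h3⟩ := hca ℓ hl
      rw [lin3_eval]
      exact mul_ne_zero (mul_ne_zero h1 h2) h3
    have E1 := drS_mul_QQ haT hca k
    have E2 := drS_mul_QQ haT hca k'
    rw [hVT, hkm] at E1
    rw [hVT, hk'm] at E2
    have : drS η V m * (QQ η T).eval a = drS η V (V.card - m) * (QQ η T).eval a := by
      rw [E1, E2, hPP]
    exact mul_right_cancel₀ hQ this

/-! ### complementation: the U⁻ sum is the U⁺ sum for the complementary size -/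

lemma drS_complement (η : ℝ) (V : Finset ℝ) (m : ℕ) (hm : m ≤ V.card) :
    ∑ I ∈ V.powersetCard m, ∏ i ∈ I, ∏ ℓ ∈ V \ I, dru η (ℓ - i)
      = drS η V (V.card - m) := by
  rw [drS_eq]
  refine Finset.sum_nbij' (fun I => V \ I) (fun J => V \ J) ?_ ?_ ?_ ?_ ?_
  · intro I hI
    obtain ⟨hIV, hc⟩ := Finset.mem_powersetCard.1 hI
    exact Finset.mem_powersetCard.2 ⟨Finset.sdiff_subset, by rw [Finset.card_sdiff_of_subset hIV, hc]⟩
  · intro J hJ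
    obtain ⟨hJV, hc⟩ := Finset.mem_powersetCard.1 hJ
    refine Finset.mem_powersetCard.2 ⟨Finset.sdiff_subset, ?_⟩
    rw [Finset.card_sdiff_of_subset hJV, hc]
    omega
  · intro I hI
    exact Finset.sdiff_sdiff_eq_self (Finset.mem_powersetCard.1 hI).1
  · intro J hJ
    exact Finset.sdiff_sdiff_eq_self (Finset.mem_powersetCard.1 hJ).1
  · intro I hI
    have hIV := (Finset.mem_powersetCard.1 hI).1
    unfold AA
    rw [Finset.sdiff_sdiff_eq_self hIV, Finset.prod_comm]

end DeformedRS
end DeformedRS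

/-- Rational degeneration of Lemma 4.1 of the paper: for every subset size m,
the sums over m-element subsets of the U⁺- and U⁻-products coincide. -/
theorem deformedRS_key_identity (S : Finset ℝ) (η : ℝ) (hη : η ≠ 0)
    (hdist : ∀ x ∈ S, ∀ y ∈ S, x ≠ y →
      x - y ≠ 0 ∧ x - y + η ≠ 0 ∧ x - y - η ≠ 0 ∧ x - y + 2*η ≠ 0 ∧ x - y - 2*η ≠ 0)
    (m : ℕ) :
    ∑ I ∈ S.powersetCard m, ∏ i ∈ I, ∏ ℓ ∈ S \ I,
        ((i - ℓ + 2*η) * (i - ℓ - η)) / ((i - ℓ + η) * (i - ℓ))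
      = ∑ I ∈ S.powersetCard m, ∏ i ∈ I, ∏ ℓ ∈ S \ I,
        ((i - ℓ - 2*η) * (i - ℓ + η)) / ((i - ℓ - η) * (i - ℓ)) := by
  by_cases hm : m ≤ S.card
  · have hL : ∑ I ∈ S.powersetCard m, ∏ i ∈ I, ∏ ℓ ∈ S \ I,
        ((i - ℓ + 2*η) * (i - ℓ - η)) / ((i - ℓ + η) * (i - ℓ)) = DeformedRS.drS η S m := rfl
    have hfac : ∀ i ℓ : ℝ, ((i - ℓ - 2*η) * (i - ℓ + η)) / ((i - ℓ - η) * (i - ℓ))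
        = DeformedRS.dru η (ℓ - i) := by
      intro i ℓ
      unfold DeformedRS.dru
      rw [show (ℓ - i + 2*η) * (ℓ - i - η) = (i - ℓ - 2*η) * (i - ℓ + η) by ring,
        show (ℓ - i + η) * (ℓ - i) = (i - ℓ - η) * (i - ℓ) by ring]
    have hR : ∑ I ∈ S.powersetCard m, ∏ i ∈ I, ∏ ℓ ∈ S \ I,
        ((i - ℓ - 2*η) * (i - ℓ + η)) / ((i - ℓ - η) * (i - ℓ))
        = ∑ I ∈ S.powersetCard m, ∏ i ∈ I, ∏ ℓ ∈ S \ I, DeformedRS.dru η (ℓ - i) := by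
      refine Finset.sum_congr rfl fun I _ => Finset.prod_congr rfl fun i _ =>
        Finset.prod_congr rfl fun ℓ _ => hfac i ℓ
    rw [hL, hR, DeformedRS.drS_complement η S m hm]
    exact DeformedRS.drS_symm hη S.card S le_rfl hdist m hm
  · have he : S.powersetCard m = ∅ := Finset.powersetCard_eq_empty.2 (by omega)
    rw [he, Finset.sum_empty, Finset.sum_empty]
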